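/- (Phase transition for δ = 0.) Let ε > 0 and let m be a distribution on V with prefix sums s⁰, and for t ∈ ℕ let s^t denote the prefix sums of T_{ε,0}^t(m). Fix 1 ≤ k ≤ q with s⁰_k > 0 and set τ_k = ⌊max{−ln(s⁰_k·(e^ε + 1))/ε + 1, 0}⌋. Then s^t_k ≤ 1/(e^ε + 1) for all 0 ≤ t ≤ τ_k − 1, and s^t_k ≥ 1/(e^ε + 1) for all t ≥ τ_k. -/

import Mathlib

open Finset

/-- Prefix sum `s_k = p_1 + ⋯ + p_k` (0-indexed internally: sum of entries with index `< k`). -/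
noncomputable def prefixSum (q : ℕ) (p : Fin q → ℝ) (k : ℕ) : ℝ :=
  ∑ i ∈ Finset.univ.filter (fun i : Fin q => (i : ℕ) < k), p i

/-- `p` is a probability distribution on `V = {1, …, q}`. -/
def IsDist (q : ℕ) (p : Fin q → ℝ) : Prop :=
  (∀ k, 0 ≤ p k) ∧ ∑ k, p k = 1

/-- The modified prefix sums `s'_k` defining the operator `T_{ε,δ}`:
`s'_0 = 0` and `s'_k = min {1, min {e^ε s_k, 1 - e^{-ε} (1 - s_k)} + δ}` for `k ≥ 1`. -/
noncomputable def sPrime (ε δ : ℝ) (q : ℕ) (p : Fin q → ℝ) (k : ℕ) : ℝ :=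
  if k = 0 then 0
  else min 1 (min (Real.exp ε * prefixSum q p k)
      (1 - Real.exp (-ε) * (1 - prefixSum q p k)) + δ)

/-- The operator `T_{ε,δ}`: `(T_{ε,δ} p)_k = s'_k - s'_{k-1}`. -/
noncomputable def Tmap (ε δ : ℝ) (q : ℕ) (p : Fin q → ℝ) : Fin q → ℝ :=
  fun k => sPrime ε δ q p ((k : ℕ) + 1) - sPrime ε δ q p (k : ℕ)

/-- `P` and `Q` are `(ε,δ)`-close: for every `S ⊆ V`,
`P(S) ≤ e^ε Q(S) + δ` and `Q(S) ≤ e^ε P(S) + δ`. -/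
def Close (ε δ : ℝ) (q : ℕ) (P Q : Fin q → ℝ) : Prop :=
  ∀ S : Finset (Fin q),
    (∑ k ∈ S, P k) ≤ Real.exp ε * (∑ k ∈ S, Q k) + δ ∧
    (∑ k ∈ S, Q k) ≤ Real.exp ε * (∑ k ∈ S, P k) + δ

/-- Dominance ordering: `x ⪯ y` iff every prefix sum of `x` is at most that of `y`. -/
def Dom (q : ℕ) (x y : Fin q → ℝ) : Prop :=
  ∀ k : ℕ, k ≤ q → prefixSum q x k ≤ prefixSum q y k

lemma prefixSum_zero (q : ℕ) (x : Fin q → ℝ) : prefixSum q x 0 = 0 := by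
  simp [prefixSum]

lemma prefixSum_succ (q : ℕ) (x : Fin q → ℝ) (k : ℕ) (hk : k < q) :
    prefixSum q x (k+1) = prefixSum q x k + x ⟨k, hk⟩ := by
  unfold prefixSum
  rw [show (Finset.univ.filter (fun i : Fin q => (i:ℕ) < k+1))
      = insert (⟨k, hk⟩ : Fin q) (Finset.univ.filter (fun i : Fin q => (i:ℕ) < k)) from ?_,
    Finset.sum_insert (by simp)]
  · ring
  · ext i
    simp [Fin.ext_iff, Nat.lt_succ_iff_lt_or_eq]
    omega

lemma prefixSum_Tmap (ε δ : ℝ) (q : ℕ) (p : Fin q → ℝ) :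
    ∀ k, k ≤ q → prefixSum q (Tmap ε δ q p) k = sPrime ε δ q p k := by
  intro k hk
  induction k with
  | zero => simp [prefixSum, sPrime]
  | succ n ih =>
    have hn : n < q := hk
    rw [prefixSum_succ q _ n hn, ih (le_of_lt hn)]
    simp [Tmap]

lemma exp_le_c_iff (ε : ℝ) (hε : 0 < ε) (s0 : ℝ) (hs : 0 < s0) (t : ℝ) :
    Real.exp (t * ε) * s0 ≤ 1 / (Real.exp ε + 1) ↔
      t ≤ -(Real.log (s0 * (Real.exp ε + 1))) / ε := by
  have hE : (0:ℝ) < Real.exp ε + 1 := by positivity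
  have hM : 0 < s0 * (Real.exp ε + 1) := by positivity
  have key : Real.exp (t*ε) * s0 * (Real.exp ε + 1)
      = Real.exp (t*ε + Real.log (s0*(Real.exp ε+1))) := by
    rw [Real.exp_add, Real.exp_log hM, mul_assoc]
  rw [le_div_iff₀ hE, key, show (1:ℝ) = Real.exp 0 by simp, Real.exp_le_exp,
    le_div_iff₀ hε]
  constructor <;> intro h <;> linarith

lemma f_eq_of_le (ε : ℝ) (hε : 0 < ε) (s : ℝ) (hs : s ≤ 1/(Real.exp ε + 1)) :
    min 1 (min (Real.exp ε * s) (1 - Real.exp (-ε) * (1 - s))) = Real.exp ε * s := by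
  have hE1 : 1 < Real.exp ε := Real.one_lt_exp_iff.2 hε
  set E := Real.exp ε with hEdef
  have hA : Real.exp (-ε) * E = 1 := by
    rw [hEdef, ← Real.exp_add]; simp
  have hApos : 0 < Real.exp (-ε) := Real.exp_pos _
  have hEpos : (0:ℝ) < E + 1 := by linarith
  have hs' : s * (E + 1) ≤ 1 := by
    rw [one_div] at hs
    calc s * (E+1) ≤ (E+1)⁻¹ * (E+1) :=
          mul_le_mul_of_nonneg_right hs (le_of_lt hEpos)
      _ = 1 := inv_mul_cancel₀ (ne_of_gt hEpos)
  have key : 1 - Real.exp (-ε)*(1-s) - E*s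
      = Real.exp (-ε) * ((E-1)*(1 - s*(E+1))) := by
    linear_combination (E*s - 1) * hA
  have h1 : E * s ≤ 1 - Real.exp (-ε) * (1 - s) := by
    have h0 : 0 ≤ Real.exp (-ε) * ((E-1)*(1 - s*(E+1))) :=
      mul_nonneg hApos.le (mul_nonneg (by linarith) (by linarith))
    linarith [key]
  have h2 : E * s ≤ 1 := by
    rcases le_or_gt 0 s with h | h <;> nlinarith
  rw [min_eq_left h1, min_eq_right h2]

lemma f_ge (ε : ℝ) (hε : 0 < ε) (s : ℝ) (hs : 1/(Real.exp ε + 1) ≤ s) :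
    1/(Real.exp ε + 1) ≤ min 1 (min (Real.exp ε * s) (1 - Real.exp (-ε) * (1 - s))) := by
  have hE1 : 1 < Real.exp ε := Real.one_lt_exp_iff.2 hε
  set E := Real.exp ε with hEdef
  have hA : Real.exp (-ε) * E = 1 := by
    rw [hEdef, ← Real.exp_add]; simp
  have hApos : 0 < Real.exp (-ε) := Real.exp_pos _
  have hEpos : (0:ℝ) < E + 1 := by linarith
  have hcpos : 0 < 1/(E+1) := by positivity
  have hc1 : 1/(E+1) ≤ 1 := by rw [div_le_one hEpos]; linarith
  have hA1 : Real.exp (-ε) < 1 := by nlinarith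
  have hAc : Real.exp (-ε) * (1/(E+1)) ≤ Real.exp (-ε) * s :=
    mul_le_mul_of_nonneg_left hs hApos.le
  refine le_min hc1 (le_min ?_ ?_)
  · nlinarith [mul_le_mul_of_nonneg_left hs (le_of_lt (lt_trans one_pos hE1))]
  · nlinarith [mul_nonneg (by linarith : (0:ℝ) ≤ 1 - Real.exp (-ε))
      (by linarith : (0:ℝ) ≤ 1 - 1/(E+1))]

/-- phase transition for δ = 0: with `s^t` the prefix sums of `T_{ε,0}^t(m)`,
`s⁰_k > 0`, and `τ_k = ⌊max {−ln(s⁰_k (e^ε + 1))/ε + 1, 0}⌋`, we have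
`s^t_k ≤ 1/(e^ε + 1)` for `0 ≤ t ≤ τ_k − 1` and `s^t_k ≥ 1/(e^ε + 1)` for `t ≥ τ_k`. -/
theorem phase_transition_delta_zero (q : ℕ) (hq : 1 ≤ q) (ε : ℝ) (hε : 0 < ε)
    (m : Fin q → ℝ) (hm : IsDist q m) (k : ℕ) (hk1 : 1 ≤ k) (hkq : k ≤ q)
    (hpos : 0 < prefixSum q m k)
    (τ : ℕ) (hτ : τ = ⌊max (-(Real.log (prefixSum q m k * (Real.exp ε + 1))) / ε + 1) 0⌋₊) :
    (∀ t : ℕ, t + 1 ≤ τ →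
      prefixSum q ((Tmap ε 0 q)^[t] m) k ≤ 1 / (Real.exp ε + 1)) ∧
    (∀ t : ℕ, τ ≤ t →
      1 / (Real.exp ε + 1) ≤ prefixSum q ((Tmap ε 0 q)^[t] m) k) := by
  set s : ℕ → ℝ := fun t => prefixSum q ((Tmap ε 0 q)^[t] m) k with hsdef
  set c : ℝ := 1 / (Real.exp ε + 1) with hcdef
  set s0 : ℝ := prefixSum q m k with hs0def
  have hs0 : s 0 = s0 := by simp [hsdef, hs0def]
  have hrec : ∀ t, s (t+1)
      = min 1 (min (Real.exp ε * s t) (1 - Real.exp (-ε) * (1 - s t))) := by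
    intro t
    have h1 : s (t+1) = prefixSum q (Tmap ε 0 q ((Tmap ε 0 q)^[t] m)) k := by
      rw [hsdef]; simp [Function.iterate_succ_apply']
    have hk0 : k ≠ 0 := by omega
    rw [h1, prefixSum_Tmap ε 0 q _ k hkq, sPrime, if_neg hk0, add_zero]
  set A : ℝ := -(Real.log (s0 * (Real.exp ε + 1))) / ε with hAdef
  have hiff : ∀ t : ℝ, Real.exp (t*ε) * s0 ≤ c ↔ t ≤ A :=
    fun t => exp_le_c_iff ε hε s0 hpos t
  constructor
  · intro t ht
    have hτ1 : 1 ≤ τ := le_trans (Nat.le_add_left 1 t) ht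
    have hfl : (τ:ℝ) ≤ max (A + 1) 0 := by
      rw [hτ]; exact Nat.floor_le (le_max_right _ _)
    have hτA : (τ:ℝ) ≤ A + 1 := by
      rcases le_or_gt (A+1) 0 with h | h
      · have h2 : (τ:ℝ) ≤ 0 := by rwa [max_eq_right h] at hfl
        have h3 : (1:ℝ) ≤ (τ:ℝ) := by exact_mod_cast hτ1
        linarith
      · rwa [max_eq_left (le_of_lt h)] at hfl
    have htA : (t:ℝ) ≤ A := by
      have h4 : ((t:ℝ)+1) ≤ (τ:ℝ) := by exact_mod_cast ht
      linarith
    have key : ∀ j : ℕ, (j:ℝ) ≤ A → s j = Real.exp ((j:ℝ)*ε) * s0 := by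
      intro j
      induction j with
      | zero => intro _; simp [hs0]
      | succ n ih =>
        intro hj
        have hn : (n:ℝ) ≤ A := by push_cast at hj ⊢; linarith
        have hsn := ih hn
        have hle : s n ≤ c := by rw [hsn]; exact (hiff n).2 hn
        rw [hrec n, f_eq_of_le ε hε _ hle, hsn, ← mul_assoc, ← Real.exp_add]
        push_cast
        ring_nf
    have hfinal : s t ≤ c := by rw [key t htA]; exact (hiff t).2 htA
    exact hfinal
  · intro t hτt
    have hlb : ∀ j : ℕ, min c (Real.exp ((j:ℝ)*ε) * s0) ≤ s j := by
      intro j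
      induction j with
      | zero =>
        rw [hs0]
        simpa using min_le_right c s0
      | succ n ih =>
        push_cast
        rcases le_or_gt c (s n) with h | h
        · calc min c (Real.exp (((n:ℕ)+1:ℝ)*ε) * s0) ≤ c := min_le_left _ _
            _ ≤ s (n+1) := by rw [hrec n]; exact f_ge ε hε (s n) h
        · have heq : s (n+1) = Real.exp ε * s n := by
            rw [hrec n]; exact f_eq_of_le ε hε _ (le_of_lt h)
          have hstep : Real.exp ε * min c (Real.exp ((n:ℝ)*ε) * s0)
              ≤ Real.exp ε * s n :=
            mul_le_mul_of_nonneg_left ih (le_of_lt (Real.exp_pos ε))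
          have hE1 : 1 < Real.exp ε := Real.one_lt_exp_iff.2 hε
          have hcpos : 0 < c := by rw [hcdef]; positivity
          have hexp : Real.exp (((n:ℕ)+1:ℝ)*ε) = Real.exp ε * Real.exp ((n:ℝ)*ε) := by
            rw [← Real.exp_add]; push_cast; ring_nf
          rcases le_total c (Real.exp ((n:ℝ)*ε) * s0) with hm | hm
          · have h5 : min c (Real.exp ((n:ℝ)*ε) * s0) = c := min_eq_left hm
            rw [h5] at hstep
            calc min c (Real.exp (((n:ℕ)+1:ℝ)*ε) * s0) ≤ c := min_le_left _ _
              _ ≤ Real.exp ε * c := by nlinarith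
              _ ≤ Real.exp ε * s n := hstep
              _ = s (n+1) := heq.symm
          · have h5 : min c (Real.exp ((n:ℝ)*ε) * s0) = Real.exp ((n:ℝ)*ε) * s0 :=
              min_eq_right hm
            rw [h5] at hstep
            calc min c (Real.exp (((n:ℕ)+1:ℝ)*ε) * s0)
                ≤ Real.exp (((n:ℕ)+1:ℝ)*ε) * s0 := min_le_right _ _
              _ = Real.exp ε * (Real.exp ((n:ℝ)*ε) * s0) := by rw [hexp, mul_assoc]
              _ ≤ Real.exp ε * s n := hstep
              _ = s (n+1) := heq.symm
    have hAτ : A < (τ:ℝ) := by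
      have h6 : max (A + 1) 0 < (τ:ℝ) + 1 := by
        rw [hτ]; exact Nat.lt_floor_add_one _
      have h7 : A + 1 ≤ max (A+1) 0 := le_max_left _ _
      linarith
    have htgt : c ≤ Real.exp ((t:ℝ)*ε) * s0 := by
      by_contra hcon
      push_neg at hcon
      have := (hiff t).1 (le_of_lt hcon)
      have h8 : (τ:ℝ) ≤ (t:ℝ) := by exact_mod_cast hτt
      linarith
    have := hlb t
    rw [min_eq_left htgt] at this
    exact this
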